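/- arXiv:1503.02791 — 3 statements merged into one kernel-verified Lean document; each statement's English description precedes it below -/
import Mathlib

section
/- Each entry h_{i j̄} of the matrix h is a continuous function on E_{2m}, and, regarded as a function of the 2n real coordinates (the real and imaginary parts of z_1, …, z_n), each entry is real analytic on E_{2m} \ Z = { z ∈ E_{2m} : z_1 ≠ 0 }. -/
open scoped ComplexOrder

noncomputable section

/-- The pseudo-egg `E_{2m} ⊆ ℂ^n`, `n = N + 2`, coordinates indexed by `Fin (N+2)`
with `z 0` playing the role of `z₁`. -/
def E2m (N : ℕ) (m : ℝ) : Set (Fin (N + 2) → ℂ) :=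
  {z | ‖z 0‖ ^ (2 * m) + ∑ j ∈ Finset.Ioi (0 : Fin (N + 2)), ‖z j‖ ^ 2 < 1}

/-- The entries `h_{i j̄}` of the Wu metric of `E_{2m}` (index `0` plays the role of `1`). -/
def hEnt (N : ℕ) (m : ℝ) (z : Fin (N + 2) → ℂ) (i j : Fin (N + 2)) : ℂ :=
  let A : ℝ := 1 - ∑ l ∈ Finset.Ioi (0 : Fin (N + 2)), ‖z l‖ ^ 2
  let B : ℝ := A ^ (1 / m)
  let C : ℝ := (B - ‖z 0‖ ^ 2) ^ 2
  if i = 0 then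
    if j = 0 then ((B / C : ℝ) : ℂ)
    else ((A ^ (-1 + 1 / m) / (m * C) : ℝ) : ℂ) * (starRingEnd ℂ) (z 0) * z j
  else if j = 0 then ((A ^ (-1 + 1 / m) / (m * C) : ℝ) : ℂ) * z 0 * (starRingEnd ℂ) (z i)
  else if i = j then
    ((A ^ (-2 + 1 / m) * ‖z 0‖ ^ 2 * ‖z i‖ ^ 2 / (m ^ 2 * C) +
      (A + ‖z i‖ ^ 2) / (A * (A - ‖z 0‖ ^ (2 * m))) : ℝ) : ℂ)
  else
    ((A ^ (-2 + 1 / m) * ‖z 0‖ ^ 2 / (m ^ 2 * C) : ℝ) : ℂ) *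
        (starRingEnd ℂ) (z i) * z j +
      ((1 / (A * (A - ‖z 0‖ ^ (2 * m))) : ℝ) : ℂ) * (starRingEnd ℂ) (z i) * z j


/-- rpow with constant exponent is real analytic at positive points. -/
lemma analyticAt_rpow_const' {x c : ℝ} (hx : 0 < x) :
    AnalyticAt ℝ (fun t : ℝ => t ^ c) x := by
  have h1 : AnalyticAt ℂ (fun w : ℂ => w ^ (c : ℂ)) ((x : ℂ)) :=
    analyticAt_id.cpow analyticAt_const (Complex.ofReal_mem_slitPlane.2 hx)
  have h2 : AnalyticAt ℝ (fun t : ℝ => (((t : ℂ) ^ (c : ℂ)).re)) x :=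
    (Complex.reCLM.analyticAt _).comp ((h1.restrictScalars).comp (Complex.ofRealCLM.analyticAt x))
  apply h2.congr
  filter_upwards [eventually_gt_nhds hx] with t ht
  rw [← Complex.ofReal_cpow ht.le, Complex.ofReal_re]

section Helpers

variable {N : ℕ}

lemma aRpowc {f : (Fin (N + 2) → ℂ) → ℝ} {z} (hf : AnalyticAt ℝ f z) (h : 0 < f z) (c : ℝ) :
    AnalyticAt ℝ (fun y => f y ^ c) z :=
  (analyticAt_rpow_const' h).comp hf

lemma aOfReal {f : (Fin (N + 2) → ℂ) → ℝ} {z} (hf : AnalyticAt ℝ f z) :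
    AnalyticAt ℝ (fun y => ((f y : ℝ) : ℂ)) z :=
  (Complex.ofRealCLM.analyticAt _).comp hf

lemma aCoord (l : Fin (N + 2)) (z : Fin (N + 2) → ℂ) :
    AnalyticAt ℝ (fun z : Fin (N + 2) → ℂ => z l) z :=
  (ContinuousLinearMap.proj (R := ℝ) (φ := fun _ : Fin (N + 2) => ℂ) l).analyticAt z

lemma aConj (l : Fin (N + 2)) (z : Fin (N + 2) → ℂ) :
    AnalyticAt ℝ (fun z : Fin (N + 2) → ℂ => (starRingEnd ℂ) (z l)) z :=
  (Complex.conjCLE.toContinuousLinearMap.analyticAt _).comp (aCoord l z)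

lemma aAbsSq (l : Fin (N + 2)) (z : Fin (N + 2) → ℂ) :
    AnalyticAt ℝ (fun z : Fin (N + 2) → ℂ => ‖z l‖ ^ 2) z := by
  have h : (fun z : Fin (N + 2) → ℂ => ‖z l‖ ^ 2)
      = fun z => (z l).re ^ 2 + (z l).im ^ 2 := by
    funext w; rw [Complex.sq_norm, Complex.normSq_apply]; ring
  rw [h]
  exact (((Complex.reCLM.analyticAt _).comp (aCoord l z)).pow 2).add
    (((Complex.imCLM.analyticAt _).comp (aCoord l z)).pow 2)

lemma aA (z : Fin (N + 2) → ℂ) :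
    AnalyticAt ℝ
      (fun z : Fin (N + 2) → ℂ =>
        1 - ∑ l ∈ Finset.Ioi (0 : Fin (N + 2)), ‖z l‖ ^ 2) z :=
  analyticAt_const.sub (Finset.analyticAt_fun_sum _ fun l _ => aAbsSq l z)

lemma contAbsSq (l : Fin (N + 2)) :
    Continuous (fun z : Fin (N + 2) → ℂ => ‖z l‖ ^ 2) :=
  (continuous_norm.comp (continuous_apply l)).pow 2

lemma contA :
    Continuous (fun z : Fin (N + 2) → ℂ =>
      1 - ∑ l ∈ Finset.Ioi (0 : Fin (N + 2)), ‖z l‖ ^ 2) :=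
  continuous_const.sub (continuous_finset_sum _ fun l _ => contAbsSq l)

lemma contConj (l : Fin (N + 2)) :
    Continuous (fun z : Fin (N + 2) → ℂ => (starRingEnd ℂ) (z l)) :=
  continuous_star.comp (continuous_apply l)

end Helpers

/-- Each entry `h_{i j̄}` of the Wu metric matrix is continuous on `E_{2m}` and, regarded
as a function of the `2n` real coordinates (i.e. real-analytically, over `ℝ`), is real
analytic on `E_{2m} \ Z = { z ∈ E_{2m} : z₁ ≠ 0 }`. -/
theorem statement13 (N : ℕ) (m : ℝ) (hm0 : 0 < m) (hm : m < 1 / 2) (i j : Fin (N + 2)) :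
    ContinuousOn (fun z => hEnt N m z i j) (E2m N m) ∧
    AnalyticOnNhd ℝ (fun z => hEnt N m z i j) {z ∈ E2m N m | z 0 ≠ 0} := by
  have key : ∀ z ∈ E2m N m,
      0 < 1 - ∑ l ∈ Finset.Ioi (0 : Fin (N + 2)), ‖z l‖ ^ 2 ∧
      ‖z 0‖ ^ (2 * m) <
        1 - ∑ l ∈ Finset.Ioi (0 : Fin (N + 2)), ‖z l‖ ^ 2 ∧
      ‖z 0‖ ^ 2 <
        (1 - ∑ l ∈ Finset.Ioi (0 : Fin (N + 2)), ‖z l‖ ^ 2) ^ (1 / m) := by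
    intro z hz
    simp only [E2m, Set.mem_setOf_eq] at hz
    have ht0 : (0 : ℝ) ≤ ‖z 0‖ ^ (2 * m) :=
      Real.rpow_nonneg (norm_nonneg _) _
    have hAm : ‖z 0‖ ^ (2 * m) <
        1 - ∑ l ∈ Finset.Ioi (0 : Fin (N + 2)), ‖z l‖ ^ 2 := by linarith
    refine ⟨lt_of_le_of_lt ht0 hAm, hAm, ?_⟩
    have h2 : (‖z 0‖ ^ (2 * m)) ^ (1 / m) = ‖z 0‖ ^ 2 := by
      rw [← Real.rpow_natCast (‖z 0‖) 2, ← Real.rpow_mul (norm_nonneg _)]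
      congr 1
      push_cast
      field_simp
    calc ‖z 0‖ ^ 2 = (‖z 0‖ ^ (2 * m)) ^ (1 / m) := h2.symm
      _ < _ := Real.rpow_lt_rpow ht0 hAm (by positivity)
  constructor
  · intro z hz
    obtain ⟨hA, hAm, hB⟩ := key z hz
    have hCpos : (0:ℝ) < ((1 - ∑ l ∈ Finset.Ioi (0 : Fin (N + 2)), ‖z l‖ ^ 2) ^ (1 / m)
        - ‖z 0‖ ^ 2) ^ 2 := pow_pos (sub_pos.2 hB) 2
    have hCne := hCpos.ne'
    have hmC : m * (((1 - ∑ l ∈ Finset.Ioi (0 : Fin (N + 2)), ‖z l‖ ^ 2) ^ (1 / m)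
        - ‖z 0‖ ^ 2) ^ 2) ≠ 0 := (mul_pos hm0 hCpos).ne'
    have hm2C : m ^ 2 * (((1 - ∑ l ∈ Finset.Ioi (0 : Fin (N + 2)), ‖z l‖ ^ 2) ^ (1 / m)
        - ‖z 0‖ ^ 2) ^ 2) ≠ 0 := (mul_pos (pow_pos hm0 2) hCpos).ne'
    have hAT : (1 - ∑ l ∈ Finset.Ioi (0 : Fin (N + 2)), ‖z l‖ ^ 2) *
        ((1 - ∑ l ∈ Finset.Ioi (0 : Fin (N + 2)), ‖z l‖ ^ 2)
          - ‖z 0‖ ^ (2 * m)) ≠ 0 := (mul_pos hA (sub_pos.2 hAm)).ne'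
    have cA : ContinuousAt (fun z : Fin (N + 2) → ℂ =>
        1 - ∑ l ∈ Finset.Ioi (0 : Fin (N + 2)), ‖z l‖ ^ 2) z := contA.continuousAt
    have cB := cA.rpow_const (p := 1 / m) (Or.inl hA.ne')
    have cB1 := cA.rpow_const (p := -1 + 1 / m) (Or.inl hA.ne')
    have cB2 := cA.rpow_const (p := -2 + 1 / m) (Or.inl hA.ne')
    have cT : ContinuousAt (fun z : Fin (N + 2) → ℂ => ‖z 0‖ ^ (2 * m)) z :=
      ((continuous_norm.comp (continuous_apply 0)).continuousAt).rpow_const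
        (Or.inr (by positivity))
    have cC := (cB.sub (contAbsSq 0).continuousAt).pow 2
    apply ContinuousAt.continuousWithinAt
    by_cases hi : i = 0 <;> by_cases hj : j = 0
    · simp only [hEnt, hi, hj, ↓reduceIte]
      exact Complex.continuous_ofReal.continuousAt.comp (cB.div cC hCne)
    · simp only [hEnt, hi, hj, ↓reduceIte]
      exact ((Complex.continuous_ofReal.continuousAt.comp
        (cB1.div (continuousAt_const.mul cC) hmC)).mul
          (contConj 0).continuousAt).mul (continuous_apply j).continuousAt
    · simp only [hEnt, hi, hj, ↓reduceIte]
      exact ((Complex.continuous_ofReal.continuousAt.comp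
        (cB1.div (continuousAt_const.mul cC) hmC)).mul
          (continuous_apply 0).continuousAt).mul (contConj i).continuousAt
    · by_cases hij : i = j
      · simp only [hEnt, hi, hj, hij, ↓reduceIte]
        exact Complex.continuous_ofReal.continuousAt.comp
          ((((cB2.mul (contAbsSq 0).continuousAt).mul (contAbsSq j).continuousAt).div
              (continuousAt_const.mul cC) hm2C).add
            ((cA.add (contAbsSq j).continuousAt).div (cA.mul (cA.sub cT)) hAT))
      · simp only [hEnt, hi, hj, hij, ↓reduceIte]
        exact (((Complex.continuous_ofReal.continuousAt.comp
            ((cB2.mul (contAbsSq 0).continuousAt).div (continuousAt_const.mul cC) hm2C)).mul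
              (contConj i).continuousAt).mul (continuous_apply j).continuousAt).add
          (((Complex.continuous_ofReal.continuousAt.comp
            (continuousAt_const.div (cA.mul (cA.sub cT)) hAT)).mul
              (contConj i).continuousAt).mul (continuous_apply j).continuousAt)
  · intro z hz
    obtain ⟨hzE, hz0⟩ := hz
    obtain ⟨hA, hAm, hB⟩ := key z hzE
    have hCpos : (0:ℝ) < ((1 - ∑ l ∈ Finset.Ioi (0 : Fin (N + 2)), ‖z l‖ ^ 2) ^ (1 / m)
        - ‖z 0‖ ^ 2) ^ 2 := pow_pos (sub_pos.2 hB) 2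
    have hCne := hCpos.ne'
    have hmC : m * (((1 - ∑ l ∈ Finset.Ioi (0 : Fin (N + 2)), ‖z l‖ ^ 2) ^ (1 / m)
        - ‖z 0‖ ^ 2) ^ 2) ≠ 0 := (mul_pos hm0 hCpos).ne'
    have hm2C : m ^ 2 * (((1 - ∑ l ∈ Finset.Ioi (0 : Fin (N + 2)), ‖z l‖ ^ 2) ^ (1 / m)
        - ‖z 0‖ ^ 2) ^ 2) ≠ 0 := (mul_pos (pow_pos hm0 2) hCpos).ne'
    have hAT : (1 - ∑ l ∈ Finset.Ioi (0 : Fin (N + 2)), ‖z l‖ ^ 2) *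
        ((1 - ∑ l ∈ Finset.Ioi (0 : Fin (N + 2)), ‖z l‖ ^ 2)
          - ‖z 0‖ ^ (2 * m)) ≠ 0 := (mul_pos hA (sub_pos.2 hAm)).ne'
    have aA' := aA (N := N) z
    have aB := aRpowc aA' hA (1 / m)
    have aB1 := aRpowc aA' hA (-1 + 1 / m)
    have aB2 := aRpowc aA' hA (-2 + 1 / m)
    have aT : AnalyticAt ℝ (fun z : Fin (N + 2) → ℂ => ‖z 0‖ ^ (2 * m)) z := by
      have hfun : (fun z : Fin (N + 2) → ℂ => ‖z 0‖ ^ (2 * m))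
          = fun z => (‖z 0‖ ^ 2) ^ m := by
        funext w
        rw [← Real.rpow_natCast (‖w 0‖) 2,
          ← Real.rpow_mul (norm_nonneg _)]
        norm_num
      rw [hfun]
      exact aRpowc (aAbsSq 0 z) (pow_pos (norm_pos_iff.2 hz0) 2) m
    have aC := (aB.sub (aAbsSq 0 z)).pow 2
    by_cases hi : i = 0 <;> by_cases hj : j = 0
    · simp only [hEnt, hi, hj, ↓reduceIte]
      exact aOfReal (aB.div aC hCne)
    · simp only [hEnt, hi, hj, ↓reduceIte]
      exact ((aOfReal (aB1.div (analyticAt_const.mul aC) hmC)).mul (aConj 0 z)).mul (aCoord j z)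
    · simp only [hEnt, hi, hj, ↓reduceIte]
      exact ((aOfReal (aB1.div (analyticAt_const.mul aC) hmC)).mul (aCoord 0 z)).mul (aConj i z)
    · by_cases hij : i = j
      · simp only [hEnt, hi, hj, hij, ↓reduceIte]
        exact aOfReal ((((aB2.mul (aAbsSq 0 z)).mul (aAbsSq j z)).div
            (analyticAt_const.mul aC) hm2C).add
          ((aA'.add (aAbsSq j z)).div (aA'.mul (aA'.sub aT)) hAT))
      · simp only [hEnt, hi, hj, hij, ↓reduceIte]
        exact (((aOfReal ((aB2.mul (aAbsSq 0 z)).div (analyticAt_const.mul aC) hm2C)).mul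
            (aConj i z)).mul (aCoord j z)).add
          (((aOfReal (analyticAt_const.div (aA'.mul (aA'.sub aT)) hAT)).mul
            (aConj i z)).mul (aCoord j z))
end
end

section
/- For every point a ∈ Z, the function z ↦ h_{2 2̄}(z), regarded as a function of the 2n real coordinates, is not (Fréchet) differentiable at a. In particular, the Wu metric of E_{2m} is not C¹-smooth at any point of Z. -/
open scoped ComplexOrder

noncomputable section

theorem aux_not_diff (p : ℝ) (hp0 : 0 < p) (hp1 : p < 1) :
    ¬ DifferentiableAt ℝ (fun t : ℝ => |t| ^ p) 0 := by
  intro h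
  have hd := h.hasDerivAt
  rw [hasDerivAt_iff_tendsto_slope] at hd
  have h1 : Filter.Tendsto (slope (fun t : ℝ => |t| ^ p) 0) (nhdsWithin 0 (Set.Ioi 0))
      (nhds (deriv (fun t : ℝ => |t| ^ p) 0)) :=
    hd.mono_left (nhdsWithin_mono _ (fun x hx => ne_of_gt hx))
  have h2 : Filter.Tendsto (slope (fun t : ℝ => |t| ^ p) 0) (nhdsWithin 0 (Set.Ioi 0))
      Filter.atTop := by
    have heq : ∀ t ∈ Set.Ioi (0:ℝ), (fun t => (t ^ (1 - p))⁻¹) t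
        = slope (fun t : ℝ => |t| ^ p) 0 t := by
      intro t ht
      simp only [slope_def_field, Set.mem_Ioi] at *
      rw [abs_of_pos ht, abs_zero, Real.zero_rpow hp0.ne', sub_zero, sub_zero,
        ← Real.rpow_neg ht.le, neg_sub, Real.rpow_sub ht, Real.rpow_one]
    have h3 : Filter.Tendsto (fun t : ℝ => (t ^ (1 - p))⁻¹) (nhdsWithin 0 (Set.Ioi 0))
        Filter.atTop := by
      apply Filter.Tendsto.inv_tendsto_nhdsGT_zero
      rw [tendsto_nhdsWithin_iff]
      constructor
      · have hc : ContinuousAt (fun t : ℝ => t ^ (1 - p)) 0 :=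
          Real.continuousAt_rpow_const 0 (1 - p) (Or.inr (by linarith))
        have := hc.tendsto.mono_left (nhdsWithin_le_nhds (s := Set.Ioi 0))
        simpa [Real.zero_rpow (by linarith : (1:ℝ) - p ≠ 0)] using this
      · filter_upwards [self_mem_nhdsWithin] with t ht
        exact Real.rpow_pos_of_pos ht _
    exact h3.congr' (by filter_upwards [self_mem_nhdsWithin] with t ht using heq t ht)
  exact (not_tendsto_nhds_of_tendsto_atTop h2 _) h1

/-- For every point `a ∈ Z` (i.e. `a ∈ E_{2m}` with `a₁ = 0`), the entry `h_{2 2̄}` of the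
Wu metric, regarded as a function of the `2n` real coordinates, is not Fréchet
differentiable at `a`; in particular the Wu metric is not `C¹` at any point of `Z`. -/
theorem statement14 (N : ℕ) (m : ℝ) (hm0 : 0 < m) (hm : m < 1 / 2)
    (a : Fin (N + 2) → ℂ) (ha : a ∈ E2m N m) (ha0 : a 0 = 0) :
    ¬ DifferentiableAt ℝ (fun z => hEnt N m z 1 1) a := by
  intro hF
  set S : ℝ := ∑ l ∈ Finset.Ioi (0 : Fin (N + 2)), ‖a l‖ ^ 2 with hS
  have hone : (1 : Fin (N + 2)) ≠ 0 := by
    simp [Fin.ext_iff, Nat.one_mod_eq_one.mpr]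
  have hA : 0 < 1 - S := by
    have := ha
    simp only [E2m, Set.mem_setOf_eq, ha0, norm_zero] at this
    rw [Real.zero_rpow (by positivity : 2 * m ≠ 0)] at this
    rw [← hS] at this
    linarith
  set A : ℝ := 1 - S with hAdef
  set B : ℝ := A ^ (1 / m) with hBdef
  have hBpos : 0 < B := Real.rpow_pos_of_pos hA _
  set c2 : ℝ := ‖a 1‖ ^ 2 with hc2
  set c : ℝ := A + c2 with hc
  have hcpos : 0 < c := by positivity
  -- the curve
  set e0 : Fin (N + 2) → ℂ := Pi.single 0 1 with he0
  set φ : ℝ → (Fin (N + 2) → ℂ) := fun t => a + (t : ℂ) • e0 with hφ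
  have hφ0 : φ 0 = a := by simp [hφ]
  have hφdiff : DifferentiableAt ℝ φ 0 := by
    rw [hφ]
    show DifferentiableAt ℝ
      (fun t : ℝ => a + Complex.ofRealCLM t • e0) 0
    exact (differentiableAt_const a).add (Complex.ofRealCLM.differentiableAt.smul_const _)
  have hGdiff : DifferentiableAt ℝ (fun t => (hEnt N m (φ t) 1 1).re) 0 := by
    have h2 : DifferentiableAt ℝ (fun z => hEnt N m z 1 1) (φ 0) := by rw [hφ0]; exact hF
    have h1 : DifferentiableAt ℝ (fun t => hEnt N m (φ t) 1 1) 0 :=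
      DifferentiableAt.comp (0:ℝ) h2 hφdiff
    exact (Complex.reCLM.differentiableAt).comp (0:ℝ) h1
  -- compute the curve values
  have hφ0t : ∀ t : ℝ, φ t 0 = (t : ℂ) := by
    intro t; simp [hφ, he0, ha0]
  have hφl : ∀ t : ℝ, ∀ l : Fin (N + 2), l ≠ 0 → φ t l = a l := by
    intro t l hl; simp [hφ, he0, Pi.single_eq_of_ne hl]
  have hsum : ∀ t : ℝ, ∑ l ∈ Finset.Ioi (0 : Fin (N + 2)), ‖φ t l‖ ^ 2 = S := by
    intro t
    apply Finset.sum_congr rfl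
    intro l hl
    rw [hφl t l (by simpa using (Finset.mem_Ioi.mp hl).ne')]
  have hG : ∀ t : ℝ, (hEnt N m (φ t) 1 1).re =
      A ^ (-2 + 1 / m) * t ^ 2 * c2 / (m ^ 2 * (B - t ^ 2) ^ 2)
        + c / (A * (A - |t| ^ (2 * m))) := by
    intro t
    have e : hEnt N m (φ t) 1 1 =
        ((A ^ (-2 + 1 / m) * ‖φ t 0‖ ^ 2 * ‖φ t 1‖ ^ 2
            / (m ^ 2 * (B - ‖φ t 0‖ ^ 2) ^ 2) +
          (A + ‖φ t 1‖ ^ 2)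
            / (A * (A - ‖φ t 0‖ ^ (2 * m))) : ℝ) : ℂ) := by
      simp only [hEnt, hsum t]
      rw [if_neg hone, if_neg hone, if_true, ← hAdef, ← hBdef]
    rw [e, Complex.ofReal_re, hφ0t t, hφl t 1 hone, Complex.norm_real, Real.norm_eq_abs, sq_abs,
      ← hc2, ← hc]
  -- split off the differentiable part
  have hPdiff : DifferentiableAt ℝ
      (fun t : ℝ => A ^ (-2 + 1 / m) * t ^ 2 * c2 / (m ^ 2 * (B - t ^ 2) ^ 2)) 0 := by
    apply DifferentiableAt.div
    · fun_prop
    · fun_prop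
    · show m ^ 2 * (B - (0:ℝ) ^ 2) ^ 2 ≠ 0
      have h0 : m ^ 2 * (B - (0:ℝ) ^ 2) ^ 2 = m ^ 2 * B ^ 2 := by norm_num
      rw [h0]
      exact (mul_pos (pow_pos hm0 2) (pow_pos hBpos 2)).ne'
  have hQdiff : DifferentiableAt ℝ (fun t : ℝ => c / (A * (A - |t| ^ (2 * m)))) 0 := by
    have := hGdiff.sub hPdiff
    refine this.congr_of_eventuallyEq ?_
    filter_upwards with t
    simp only [Pi.sub_apply]
    rw [hG t]; ring
  -- value of Q at 0
  have hQ0 : c / (A * (A - |(0:ℝ)| ^ (2 * m))) = c / (A * A) := by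
    rw [abs_zero, Real.zero_rpow (by positivity : 2 * m ≠ 0), sub_zero]
  have hAQ0 : A * (c / (A * (A - |(0:ℝ)| ^ (2 * m)))) ≠ 0 := by
    rw [hQ0]
    exact (mul_pos hA (div_pos hcpos (mul_pos hA hA))).ne'
  -- recover u
  have hudiff : DifferentiableAt ℝ (fun t : ℝ => |t| ^ (2 * m)) 0 := by
    have hhdiff : DifferentiableAt ℝ
        (fun t : ℝ => A - c / (A * (c / (A * (A - |t| ^ (2 * m)))))) 0 := by
      apply (differentiableAt_const A).sub
      exact (differentiableAt_const c).div ((differentiableAt_const A).mul hQdiff) hAQ0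
    refine hhdiff.congr_of_eventuallyEq ?_
    have hcont : ContinuousAt (fun t : ℝ => |t| ^ (2 * m)) 0 := by
      have h1 : ContinuousAt (fun s : ℝ => s ^ (2 * m)) |(0:ℝ)| := by
        simpa using Real.continuousAt_rpow_const 0 (2 * m) (Or.inr (by positivity))
      exact h1.comp continuous_abs.continuousAt
    have hev : ∀ᶠ t in nhds (0:ℝ), |t| ^ (2 * m) < A := by
      refine Filter.Tendsto.eventually_lt_const hA ?_
      simpa [Real.zero_rpow (by positivity : 2 * m ≠ 0)] using hcont.tendsto
    filter_upwards [hev] with t ht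
    have h1 : A - |t| ^ (2 * m) ≠ 0 := by
      have : |t| ^ (2 * m) < A := ht
      linarith
    field_simp
    ring
  exact aux_not_diff (2 * m) (by positivity) (by linarith) hudiff
end
end

section
/- For every z_1 ∈ ℂ with 0 < |z_1| < 1, at the point (z_1, 0̂) ∈ E_{2m} one has ∂h_{1 2̄}/∂z_2 (z_1, 0̂) ≠ ∂h_{2 2̄}/∂z_1 (z_1, 0̂), where the derivatives are Wirtinger derivatives. -/
open scoped ComplexOrder

noncomputable section

/-- Wirtinger derivative `∂f/∂z_k = (1/2)(∂f/∂x_k − i ∂f/∂y_k)`. -/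
def wirt (N : ℕ) (f : (Fin (N + 2) → ℂ) → ℂ) (z : Fin (N + 2) → ℂ) (k : Fin (N + 2)) : ℂ :=
  (1 / 2) * (fderiv ℝ f z (Pi.single k 1) - Complex.I * fderiv ℝ f z (Pi.single k Complex.I))

/-- Wirtinger derivative `∂f/∂z̄_k = (1/2)(∂f/∂x_k + i ∂f/∂y_k)`. -/
def wirtBar (N : ℕ) (f : (Fin (N + 2) → ℂ) → ℂ) (z : Fin (N + 2) → ℂ) (k : Fin (N + 2)) : ℂ :=
  (1 / 2) * (fderiv ℝ f z (Pi.single k 1) + Complex.I * fderiv ℝ f z (Pi.single k Complex.I))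

/-! ### Auxiliary lemmas -/

open Real

theorem strictConvexOn_sinh' : StrictConvexOn ℝ (Set.Ici (0:ℝ)) Real.sinh := by
  apply strictConvexOn_of_deriv2_pos (convex_Ici 0) Real.continuous_sinh.continuousOn
  intro x hx
  rw [interior_Ici] at hx
  have h2 : deriv^[2] Real.sinh = Real.sinh := by
    ext y
    simp [Function.iterate_succ, Real.deriv_sinh, Real.deriv_cosh]
  rw [h2]
  exact Real.sinh_pos_iff.2 hx

theorem sinh_mul_lt' {m t : ℝ} (hm0 : 0 < m) (hm1 : m < 1) (ht : 0 < t) :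
    Real.sinh (m * t) < m * Real.sinh t := by
  have h := strictConvexOn_sinh'.2 (Set.self_mem_Ici) (Set.mem_Ici.2 ht.le) ht.ne
    (by linarith : (0:ℝ) < 1 - m) hm0 (by ring)
  simpa [Real.sinh_zero] using h

theorem key_half' {m s : ℝ} (hm0 : 0 < m) (hm1 : m < 1) (hs0 : 0 < s) (hs1 : s < 1) :
    1 - s ^ m < m * s ^ ((m-1)/2) * (1 - s) := by
  set t : ℝ := -Real.log s / 2 with ht_def
  have hlog : Real.log s < 0 := Real.log_neg hs0 hs1
  have ht : 0 < t := by rw [ht_def]; linarith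
  have hls : Real.log s = -(2*t) := by rw [ht_def]; ring
  have hsm : s ^ m = exp (-(m*t)) * exp (-(m*t)) := by
    rw [Real.rpow_def_of_pos hs0, hls, ← Real.exp_add]; ring_nf
  have hsh : s ^ ((m-1)/2) = exp t * exp (-(m*t)) := by
    rw [Real.rpow_def_of_pos hs0, hls, ← Real.exp_add]; ring_nf
  have hs_eq : s = exp (-t) * exp (-t) := by
    conv_lhs => rw [← Real.exp_log hs0]
    rw [hls, ← Real.exp_add]; ring_nf
  have hsinh := sinh_mul_lt' hm0 hm1 ht
  rw [Real.sinh_eq, Real.sinh_eq] at hsinh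
  have e1 : exp (-(m*t)) * exp (m*t) = 1 := by rw [← Real.exp_add]; simp
  have e2 : exp t * exp (-t) = 1 := by rw [← Real.exp_add]; simp
  have hep := Real.exp_pos (-(m*t))
  have e3 : m * (exp t * exp (-(m*t)) * (1 - exp (-t) * exp (-t)))
      = m * (exp t * exp (-(m*t)) - exp (-t) * exp (-(m*t))) := by
    have h4 : exp t * exp (-(m*t)) * (1 - exp (-t) * exp (-t))
        = exp t * exp (-(m*t)) - exp (-t) * exp (-(m*t)) := by
      linear_combination (-(exp (-t) * exp (-(m*t)))) * e2
    rw [h4]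
  have h5 := mul_lt_mul_of_pos_left hsinh (mul_pos two_pos hep)
  rw [hsm, hsh, hs_eq]
  nlinarith [h5, e1, e2, e3]

theorem key_ineq' {m s : ℝ} (hm0 : 0 < m) (hm1 : m < 1) (hs0 : 0 < s) (hs1 : s < 1) :
    1 / (m * (1-s)^2) < m * s ^ (m-1) / (1 - s ^ m)^2 := by
  have h := key_half' hm0 hm1 hs0 hs1
  have hsm1 : s ^ m < 1 := Real.rpow_lt_one hs0.le hs1 hm0
  have h1 : (0:ℝ) < 1 - s ^ m := by linarith
  have hsq : s ^ ((m-1)/2) * s ^ ((m-1)/2) = s ^ (m-1) := by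
    rw [← Real.rpow_add hs0]; ring_nf
  have hsqlt : (1 - s ^ m)^2 < (m * s ^ ((m-1)/2) * (1-s))^2 :=
    pow_lt_pow_left₀ h h1.le two_ne_zero
  have hrw : (m * s ^ ((m-1)/2) * (1-s))^2 = m * s ^ (m-1) * (m * (1-s)^2) := by
    rw [← hsq]; ring
  rw [div_lt_div_iff₀ (mul_pos hm0 (pow_pos (by linarith) 2)) (pow_pos h1 2)]
  nlinarith [hsqlt, hrw]

theorem hasFDerivAt_normSq' (w : ℂ) :
    HasFDerivAt Complex.normSq
      (((2*w.re) • Complex.reCLM + (2*w.im) • Complex.imCLM : ℂ →L[ℝ] ℝ)) w := by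
  have h := ((Complex.reCLM.hasFDerivAt (x := w)).mul (Complex.reCLM.hasFDerivAt (x := w))).add
    ((Complex.imCLM.hasFDerivAt (x := w)).mul (Complex.imCLM.hasFDerivAt (x := w)))
  have e1 : (⇑Complex.reCLM * ⇑Complex.reCLM + ⇑Complex.imCLM * ⇑Complex.imCLM : ℂ → ℝ)
      = Complex.normSq := by
    funext y; simp [Complex.normSq_apply]
  rw [e1] at h
  refine h.congr_fderiv ?_
  ext v <;> simp <;> try ring

theorem hasFDerivAt_nsq_proj {k : ℕ} (l : Fin k) (p : Fin k → ℂ) :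
    HasFDerivAt (fun z : Fin k → ℂ => ‖z l‖ ^ 2)
      ((((2*(p l).re) • Complex.reCLM + (2*(p l).im) • Complex.imCLM).comp
        (ContinuousLinearMap.proj (R := ℝ) (φ := fun _ : Fin k => ℂ) l))) p := by
  have hproj := (ContinuousLinearMap.proj (R := ℝ) (φ := fun _ : Fin k => ℂ) l).hasFDerivAt (x := p)
  have h := (hasFDerivAt_normSq' (p l)).comp p hproj
  have e : (Complex.normSq ∘ ⇑(ContinuousLinearMap.proj (R := ℝ) (φ := fun _ : Fin k => ℂ) l))
      = fun z : Fin k → ℂ => ‖z l‖ ^ 2 := by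
    funext z; simp [Function.comp, Complex.sq_norm]
  rwa [e] at h

theorem hasFDerivAt_nsq_proj_zero {k : ℕ} (l : Fin k) (p : Fin k → ℂ) (hp : p l = 0) :
    HasFDerivAt (fun z : Fin k → ℂ => ‖z l‖ ^ 2)
      (0 : (Fin k → ℂ) →L[ℝ] ℝ) p := by
  have h := hasFDerivAt_nsq_proj l p
  rw [hp] at h
  simpa using h

def Af (N : ℕ) (z : Fin (N + 2) → ℂ) : ℝ :=
  1 - ∑ l ∈ Finset.Ioi (0 : Fin (N + 2)), ‖z l‖ ^ 2

def Cf (N : ℕ) (m : ℝ) (z : Fin (N + 2) → ℂ) : ℝ :=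
  (Af N z ^ (1 / m) - ‖z 0‖ ^ 2) ^ 2

def u1f (N : ℕ) (m : ℝ) (z : Fin (N + 2) → ℂ) : ℂ :=
  ((Af N z ^ (-1 + 1 / m) / (m * Cf N m z) : ℝ) : ℂ) * (starRingEnd ℂ) (z 0)

def T1f (N : ℕ) (m : ℝ) (z : Fin (N + 2) → ℂ) : ℝ :=
  (Af N z ^ (-2 + 1 / m) * ‖z 0‖ ^ 2 / (m ^ 2 * Cf N m z)) * ‖z 1‖ ^ 2

def T2f (N : ℕ) (m : ℝ) (z : Fin (N + 2) → ℂ) : ℝ :=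
  (Af N z + ‖z 1‖ ^ 2) * (Af N z * (Af N z - ‖z 0‖ ^ (2 * m)))⁻¹

set_option maxHeartbeats 1000000 in
/-- For every `z₁ ∈ ℂ` with `0 < |z₁| < 1`, at the point `(z₁, 0̂) ∈ E_{2m}` the Wirtinger
derivatives satisfy `∂h_{1 2̄}/∂z₂ (z₁,0̂) ≠ ∂h_{2 2̄}/∂z₁ (z₁,0̂)`. -/
theorem statement15 (N : ℕ) (m : ℝ) (hm0 : 0 < m) (hm : m < 1 / 2)
    (z₁ : ℂ) (hz0 : 0 < ‖z₁‖) (hz1 : ‖z₁‖ < 1) :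
    wirt N (fun z => hEnt N m z 0 1) (fun i => if i = 0 then z₁ else 0) 1 ≠
      wirt N (fun z => hEnt N m z 1 1) (fun i => if i = 0 then z₁ else 0) 0 := by
  have hm1 : m < 1 := by linarith
  have h10 : (1 : Fin (N + 2)) ≠ 0 := by
    simp [Fin.ext_iff]
  set p : Fin (N + 2) → ℂ := fun i => if i = 0 then z₁ else 0 with hpdef
  have hp0 : p 0 = z₁ := by simp [hpdef]
  have hpl : ∀ l : Fin (N + 2), l ≠ 0 → p l = 0 := by
    intro l hl; simp [hpdef, hl]
  set s : ℝ := Complex.normSq z₁ with hsdef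
  have hsabs : ‖z₁‖ ^ 2 = s := Complex.sq_norm z₁
  have hs0 : 0 < s := by rw [← hsabs]; positivity
  have hs1 : s < 1 := by rw [← hsabs]; nlinarith
  have hz₁ne : z₁ ≠ 0 := by
    intro h; rw [h] at hz0; simp at hz0
  -- derivative of Af at p is 0
  have hA : HasFDerivAt (Af N) (0 : (Fin (N + 2) → ℂ) →L[ℝ] ℝ) p := by
    have hsum : HasFDerivAt
        (fun z : Fin (N + 2) → ℂ => ∑ l ∈ Finset.Ioi (0 : Fin (N + 2)), ‖z l‖ ^ 2)
        (∑ l ∈ Finset.Ioi (0 : Fin (N + 2)), (0 : (Fin (N + 2) → ℂ) →L[ℝ] ℝ)) p :=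
      HasFDerivAt.fun_sum fun l hl =>
        hasFDerivAt_nsq_proj_zero l p (hpl l (Finset.mem_Ioi.mp hl).ne')
    have h := (hasFDerivAt_const (1 : ℝ) p).fun_sub hsum
    simp only [Finset.sum_const_zero, sub_zero] at h
    exact h
  have hAp : Af N p = 1 := by
    rw [Af, Finset.sum_eq_zero, sub_zero]
    intro l hl
    rw [hpl l (Finset.mem_Ioi.mp hl).ne']
    simp
  have hA' : DifferentiableAt ℝ (Af N) p := hA.differentiableAt
  have hApne : Af N p ≠ 0 := by rw [hAp]; norm_num
  -- Cf value and differentiability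
  have hCp : Cf N m p = (1 - s) ^ 2 := by
    rw [Cf, hAp, Real.one_rpow, hp0, hsabs]
  have hns0 : DifferentiableAt ℝ (fun z : Fin (N + 2) → ℂ => ‖z 0‖ ^ 2) p :=
    (hasFDerivAt_nsq_proj 0 p).differentiableAt
  have hC : DifferentiableAt ℝ (Cf N m) p := by
    have hB : DifferentiableAt ℝ (fun z : Fin (N + 2) → ℂ => Af N z ^ (1 / m)) p :=
      hA'.rpow_const (Or.inl hApne)
    exact (hB.sub hns0).pow 2
  have h1s : (0:ℝ) < 1 - s := by linarith
  have hmCne : m * Cf N m p ≠ 0 := by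
    rw [hCp]; positivity
  have hIa : ∀ a : ℂ, (1/2 : ℂ) * (a * 1 - Complex.I * (a * Complex.I)) = a := by
    intro a; linear_combination (-(a/2)) * Complex.I_mul_I
  -- LHS
  have e1 : (fun z => hEnt N m z 0 1) = fun z : Fin (N + 2) → ℂ => u1f N m z * z 1 := by
    funext z
    simp [hEnt, u1f, Af, Cf, h10]
  have hu : DifferentiableAt ℝ (u1f N m) p := by
    have hg : DifferentiableAt ℝ
        (fun z : Fin (N + 2) → ℂ => Af N z ^ (-1 + 1 / m) / (m * Cf N m z)) p := by
      have h1 : DifferentiableAt ℝ (fun z : Fin (N + 2) → ℂ => Af N z ^ (-1 + 1 / m)) p :=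
        hA'.rpow_const (Or.inl hApne)
      simp only [div_eq_mul_inv]
      exact h1.mul (((differentiableAt_const m).mul hC).inv hmCne)
    have hof : DifferentiableAt ℝ
        (fun z : Fin (N + 2) → ℂ => ((Af N z ^ (-1 + 1 / m) / (m * Cf N m z) : ℝ) : ℂ)) p :=
      Complex.ofRealCLM.differentiableAt.comp p hg
    have hconj : DifferentiableAt ℝ (fun z : Fin (N + 2) → ℂ => (starRingEnd ℂ) (z 0)) p := by
      have h := Complex.conjCLE.differentiableAt.comp p
        ((ContinuousLinearMap.proj (R := ℝ) (φ := fun _ : Fin (N + 2) => ℂ) 0)).differentiableAt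
      exact h
    exact hof.mul hconj
  have hw : HasFDerivAt (fun z : Fin (N + 2) → ℂ => z 1)
      (ContinuousLinearMap.proj (R := ℝ) (φ := fun _ : Fin (N + 2) => ℂ) 1) p :=
    (ContinuousLinearMap.proj (R := ℝ) (φ := fun _ : Fin (N + 2) => ℂ) 1).hasFDerivAt
  have hmul : HasFDerivAt (fun z : Fin (N + 2) → ℂ => u1f N m z * z 1)
      (u1f N m p • (ContinuousLinearMap.proj (R := ℝ) (φ := fun _ : Fin (N + 2) => ℂ) 1)) p := by
    have h := (hu.hasFDerivAt).mul hw
    refine h.congr_fderiv ?_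
    rw [hpl 1 h10]
    ext v
    simp
  have hup : u1f N m p = ((1 / (m * (1 - s) ^ 2) : ℝ) : ℂ) * (starRingEnd ℂ) z₁ := by
    rw [u1f, hAp, hCp, Real.one_rpow, hp0]
  have hLHS : wirt N (fun z => hEnt N m z 0 1) p 1
      = ((1 / (m * (1 - s) ^ 2) : ℝ) : ℂ) * (starRingEnd ℂ) z₁ := by
    rw [e1]
    simp only [wirt]
    rw [hmul.fderiv]
    simp only [ContinuousLinearMap.smul_apply, ContinuousLinearMap.proj_apply,
      Pi.single_eq_same, smul_eq_mul]
    rw [hIa, hup]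
  -- RHS
  have habsz : ∀ w : ℂ, ‖w‖ ^ (2 * m) = (‖w‖ ^ 2 : ℝ) ^ m := by
    intro w
    rw [← Real.rpow_natCast (‖w‖) 2, ← Real.rpow_mul (norm_nonneg w)]
    norm_num
  have hsm : ‖z₁‖ ^ (2 * m) = s ^ m := by rw [habsz, hsabs]
  have hsmlt : s ^ m < 1 := Real.rpow_lt_one hs0.le hs1 hm0
  have hsmpos : 0 < s ^ m := Real.rpow_pos_of_pos hs0 m
  set D0 : (Fin (N + 2) → ℂ) →L[ℝ] ℝ :=
    ((2 * z₁.re) • Complex.reCLM + (2 * z₁.im) • Complex.imCLM).comp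
      (ContinuousLinearMap.proj (R := ℝ) (φ := fun _ : Fin (N + 2) => ℂ) 0) with hD0def
  have hns0' : HasFDerivAt (fun z : Fin (N + 2) → ℂ => ‖z 0‖ ^ 2) D0 p := by
    have h := hasFDerivAt_nsq_proj 0 p
    rw [hp0] at h
    exact h
  have hq : HasFDerivAt (fun z : Fin (N + 2) → ℂ => ‖z 0‖ ^ (2 * m))
      ((m * s ^ (m - 1)) • D0) p := by
    have h := hns0'.rpow_const (p := m) (Or.inl (by rw [hp0, hsabs]; exact hs0.ne'))
    rw [hp0, hsabs] at h
    have e : (fun z : Fin (N + 2) → ℂ => (‖z 0‖ ^ 2 : ℝ) ^ m)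
        = fun z : Fin (N + 2) → ℂ => ‖z 0‖ ^ (2 * m) := by
      funext z; rw [habsz]
    rwa [e] at h
  have hψ : HasFDerivAt (fun z : Fin (N + 2) → ℂ => ‖z 1‖ ^ 2)
      (0 : (Fin (N + 2) → ℂ) →L[ℝ] ℝ) p := hasFDerivAt_nsq_proj_zero 1 p (hpl 1 h10)
  have hT1 : HasFDerivAt (T1f N m) (0 : (Fin (N + 2) → ℂ) →L[ℝ] ℝ) p := by
    have hφ : DifferentiableAt ℝ
        (fun z : Fin (N + 2) → ℂ =>
          Af N z ^ (-2 + 1 / m) * ‖z 0‖ ^ 2 / (m ^ 2 * Cf N m z)) p := by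
      have h1 : DifferentiableAt ℝ (fun z : Fin (N + 2) → ℂ => Af N z ^ (-2 + 1 / m)) p :=
        hA'.rpow_const (Or.inl hApne)
      simp only [div_eq_mul_inv]
      exact (h1.mul hns0).mul
        (((differentiableAt_const (m ^ 2)).mul hC).inv (show m ^ 2 * Cf N m p ≠ 0 by rw [hCp]; positivity))
    have h := hφ.hasFDerivAt.mul hψ
    refine h.congr_fderiv ?_
    rw [hpl 1 h10]
    ext v
    simp
  have hnum : HasFDerivAt (fun z : Fin (N + 2) → ℂ => Af N z + ‖z 1‖ ^ 2)
      (0 : (Fin (N + 2) → ℂ) →L[ℝ] ℝ) p := by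
    have h := hA.fun_add hψ
    simp only [add_zero] at h
    exact h
  have hden : HasFDerivAt (fun z : Fin (N + 2) → ℂ =>
      Af N z * (Af N z - ‖z 0‖ ^ (2 * m)))
      (-((m * s ^ (m - 1)) • D0)) p := by
    have h := hA.mul (hA.sub hq)
    refine h.congr_fderiv ?_
    rw [hAp]
    ext v
    simp
  have hdenpv : Af N p * (Af N p - ‖p 0‖ ^ (2 * m)) = 1 - s ^ m := by
    rw [hAp, hp0, hsm]; ring
  have hsmne : (1:ℝ) - s ^ m ≠ 0 := ne_of_gt (by linarith)
  have hdne : Af N p * (Af N p - ‖p 0‖ ^ (2 * m)) ≠ 0 := by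
    rw [hdenpv]; exact hsmne
  have hinv := (hasFDerivAt_inv' (𝕜 := ℝ) hdne).comp p hden
  have hinv' : HasFDerivAt (fun z : Fin (N + 2) → ℂ =>
      (Af N z * (Af N z - ‖z 0‖ ^ (2 * m)))⁻¹)
      ((-ContinuousLinearMap.mulLeftRight ℝ ℝ
          (Af N p * (Af N p - ‖p 0‖ ^ (2 * m)))⁻¹
          (Af N p * (Af N p - ‖p 0‖ ^ (2 * m)))⁻¹).comp
        (-((m * s ^ (m - 1)) • D0))) p := hinv
  have hT2 := hnum.mul hinv'
  have hT := hT1.add hT2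
  have hF2 := Complex.ofRealCLM.hasFDerivAt.comp p hT
  have e2 : (fun z => hEnt N m z 1 1)
      = fun z : Fin (N + 2) → ℂ => ((T1f N m z + T2f N m z : ℝ) : ℂ) := by
    funext z
    simp only [hEnt, h10, if_false, if_neg, ite_false, ite_true, if_true, eq_self_iff_true,
      T1f, T2f, Af, Cf]
    rw [Complex.ofReal_inj]
    ring
  have hF2' : HasFDerivAt (fun z : Fin (N + 2) → ℂ => ((T1f N m z + T2f N m z : ℝ) : ℂ)) _ p :=
    hF2
  have hRHS : wirt N (fun z => hEnt N m z 1 1) p 0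
      = ((m * s ^ (m - 1) / (1 - s ^ m) ^ 2 : ℝ) : ℂ) * (starRingEnd ℂ) z₁ := by
    rw [e2]
    simp only [wirt]
    rw [hF2'.fderiv]
    simp only [ContinuousLinearMap.add_apply, ContinuousLinearMap.coe_comp', Function.comp_apply,
      ContinuousLinearMap.zero_apply, ContinuousLinearMap.smul_apply, smul_eq_mul,
      ContinuousLinearMap.neg_apply, ContinuousLinearMap.mulLeftRight_apply,
      ContinuousLinearMap.proj_apply, Pi.single_eq_same, Complex.ofRealCLM_apply,
      Complex.reCLM_apply, Complex.imCLM_apply, Complex.one_re, Complex.one_im,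
      Complex.I_re, Complex.I_im, hAp, hp0, hsm, hpl 1 h10, map_zero, norm_zero, zero_add, add_zero,
      mul_zero, zero_mul, sub_zero, one_mul, mul_one, zero_pow, ne_eq]
    have hD01 : D0 (Pi.single 0 1) = 2 * z₁.re := by
      rw [hD0def]
      simp
    have hD0I : D0 (Pi.single 0 Complex.I) = 2 * z₁.im := by
      rw [hD0def]
      simp
    rw [hD01, hD0I, show (1/2 : ℂ) = ((1/2 : ℝ) : ℂ) by norm_num]
    rw [Complex.ext_iff]
    constructor
    · simp only [Complex.mul_re, Complex.mul_im, Complex.sub_re, Complex.sub_im,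
        Complex.ofReal_re, Complex.ofReal_im, Complex.I_re, Complex.I_im,
        Complex.conj_re, Complex.conj_im]
      field_simp
      ring
    · simp only [Complex.mul_re, Complex.mul_im, Complex.sub_re, Complex.sub_im,
        Complex.ofReal_re, Complex.ofReal_im, Complex.I_re, Complex.I_im,
        Complex.conj_re, Complex.conj_im]
      field_simp
      ring
  rw [hLHS, hRHS]
  intro h
  have hc : (starRingEnd ℂ) z₁ ≠ 0 := by
    simp only [ne_eq, map_eq_zero]
    exact hz₁ne
  have h2 := mul_right_cancel₀ hc h
  have h3 : (1 / (m * (1 - s) ^ 2) : ℝ) = m * s ^ (m - 1) / (1 - s ^ m) ^ 2 :=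
    Complex.ofReal_inj.mp h2
  exact absurd h3 (ne_of_lt (key_ineq' hm0 hm1 hs0 hs1))
end
end
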